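/- Let X be a complex Banach space, T a bounded linear operator on X with uniformly bounded powers, L a (possibly unbounded, everywhere defined) linear map from X to X with T ∘ L = λ · (L ∘ T) for some real λ > 1. If f is a generalized eigenvector of T for a nonzero eigenvalue α (i.e. (T-α)^k f = 0 for some k ≥ 1), then L^m f = 0 for every integer m with λ^m · |α| > 1. -/

import Mathlib

lemma comm_pow_aux {X : Type*} [AddCommGroup X] [Module ℂ X]
    (T L : Module.End ℂ X) (lam : ℂ)
    (hcomm : T * L = lam • (L * T)) (μ : ℂ) (k : ℕ) :
    (T - (lam * μ) • 1) ^ k * L = lam ^ k • (L * (T - μ • 1) ^ k) := by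
  have h1 : (T - (lam * μ) • 1) * L = lam • (L * (T - μ • 1)) := by
    rw [sub_mul, hcomm, mul_sub, smul_sub]
    congr 1
    rw [smul_mul_assoc, mul_smul, mul_smul_comm, one_mul, mul_one]
  induction k with
  | zero => simp
  | succ k ih =>
    rw [pow_succ', pow_succ', mul_assoc, ih, mul_smul_comm, ← mul_assoc, h1,
      smul_mul_assoc, mul_assoc, smul_smul, mul_comm lam (lam ^ k), ← pow_succ']

lemma no_gen_eig {X : Type*} [NormedAddCommGroup X] [NormedSpace ℂ X]
    (T : X →L[ℂ] X) (C : ℝ) (hT : ∀ n : ℕ, ‖T ^ n‖ ≤ C)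
    (β : ℂ) (hβ : 1 < ‖β‖) (k : ℕ) :
    ∀ g : X, (((T : Module.End ℂ X) - β • 1) ^ k) g = 0 → g = 0 := by
  induction k with
  | zero => intro g hg; simpa using hg
  | succ k ih =>
    intro g hg
    have h1 : (((T : Module.End ℂ X) - β • 1)) g = 0 := by
      apply ih
      rw [pow_succ] at hg
      simpa [Module.End.mul_apply] using hg
    have hTg : T g = β • g := by
      have := h1
      simp [sub_eq_zero] at this
      simpa using this
    have hn : ∀ n : ℕ, (T ^ n) g = β ^ n • g := by
      intro n
      induction n with
      | zero => simp
      | succ n ihn =>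
        rw [pow_succ', pow_succ']
        simp only [ContinuousLinearMap.mul_apply, ihn, map_smul, hTg, smul_smul]
        rw [mul_comm]
    by_contra hg0
    have hgpos : 0 < ‖g‖ := norm_pos_iff.mpr hg0
    have hb : ∀ n : ℕ, ‖β‖ ^ n ≤ C := by
      intro n
      have h2 : ‖(T ^ n) g‖ ≤ C * ‖g‖ :=
        le_trans ((T ^ n).le_opNorm g) (by
          exact mul_le_mul_of_nonneg_right (hT n) (norm_nonneg g))
      rw [hn n, norm_smul, norm_pow] at h2
      exact le_of_mul_le_mul_right h2 hgpos
    obtain ⟨n, hn'⟩ := pow_unbounded_of_one_lt C hβ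
    exact absurd (hb n) (not_le.mpr hn')

theorem nilpotency_of_Lv {X : Type*} [NormedAddCommGroup X]
    [NormedSpace ℂ X] [CompleteSpace X]
    (T : X →L[ℂ] X) (C : ℝ) (hT : ∀ n : ℕ, ‖T ^ n‖ ≤ C)
    (L : Module.End ℂ X) (lam : ℝ) (hlam : 1 < lam)
    (hcomm : (T : Module.End ℂ X) * L = ((lam : ℂ)) • (L * (T : Module.End ℂ X)))
    (α : ℂ) (hα : α ≠ 0) (f : X) (k : ℕ) (hk : 1 ≤ k)
    (heig : ((T - α • 1) ^ k) f = 0) :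
    ∀ m : ℕ, 1 < lam ^ m * ‖α‖ → (L ^ m) f = 0 := by
  have key : ∀ m : ℕ,
      ((((T : Module.End ℂ X) - (((lam : ℂ)) ^ m * α) • 1) ^ k)) ((L ^ m) f) = 0 := by
    intro m
    induction m with
    | zero =>
      simp only [pow_zero, one_mul, Module.End.one_apply]
      have h0 : ((T : Module.End ℂ X) - α • 1)
          = ((T - α • 1 : X →L[ℂ] X) : Module.End ℂ X) := by
        simp [ContinuousLinearMap.one_def]; rfl
      have h : ∀ n : ℕ, ((T : Module.End ℂ X) - α • 1) ^ n
          = (((T - α • 1) ^ n : X →L[ℂ] X) : Module.End ℂ X) := by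
        intro n
        induction n with
        | zero => simp
        | succ n ih => rw [pow_succ, pow_succ, ih, h0]; rfl
      rw [h k]; exact heig
    | succ m ihm =>
      have hc := comm_pow_aux (T : Module.End ℂ X) L (lam : ℂ) hcomm ((lam : ℂ) ^ m * α) k
      have happ := congrArg (fun (A : Module.End ℂ X) => A ((L ^ m) f)) hc
      simp only [Module.End.mul_apply, LinearMap.smul_apply] at happ
      have e1 : (lam : ℂ) * ((lam : ℂ) ^ m * α) = (lam : ℂ) ^ (m + 1) * α := by ring
      have e2 : L ((L ^ m) f) = (L ^ (m + 1)) f := by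
        rw [pow_succ', Module.End.mul_apply]
      rw [e1, e2, ihm, map_zero, smul_zero] at happ
      exact happ
  intro m hm
  have hβ : 1 < ‖((lam : ℂ)) ^ m * α‖ := by
    rw [norm_mul, norm_pow, Complex.norm_real, Real.norm_eq_abs,
      abs_of_pos (lt_trans one_pos hlam)]
    exact hm
  exact no_gen_eig T C hT _ hβ k _ (key m)
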